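/- Let 1 < p < 2 and let U, V be p-integrable vector fields on a measure space. Then ∫_Ω |U − V|^p dμ ≤ ( (1/(p − 1)) ∫_Ω (|U|^{p−2} U − |V|^{p−2} V) · (U − V) dμ )^{p/2} · ( 2 ∫_Ω |U|^p dμ + 2 ∫_Ω |V|^p dμ )^{(2−p)/2}; here the integrand (|U|^{p−2} U − |V|^{p−2} V) · (U − V) is nonnegative pointwise. -/

import Mathlib

open MeasureTheory Real

-- tangent line bound from Bernoulli
lemma aux_tangent {p : ℝ} (hp1 : 1 < p) (hp2 : p < 2) {s t : ℝ} (ht : 0 ≤ t) (hts : t ≤ s) :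
    (p - 1) * (s - t) * s ^ (p - 2) ≤ s ^ (p - 1) - t ^ (p - 1) := by
  have hs : 0 ≤ s := ht.trans hts
  rcases hs.eq_or_lt with h | h
  · have hts0 : t = 0 := le_antisymm (h ▸ hts) ht
    simp [← h, hts0, Real.zero_rpow (by linarith : p - 1 ≠ 0)]
  · -- s > 0
    have hb := rpow_one_add_le_one_add_mul_self
      (s := t / s - 1) (by have := div_nonneg ht h.le; linarith)
      (p := p - 1) (by linarith) (by linarith)
    rw [add_sub_cancel] at hb
    -- (t/s)^(p-1) ≤ 1 + (p-1)*(t/s - 1)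
    have hdiv : (t / s) ^ (p - 1) = t ^ (p - 1) / s ^ (p - 1) :=
      Real.div_rpow ht hs _
    have hsp1 : (0:ℝ) < s ^ (p - 1) := Real.rpow_pos_of_pos h _
    have hkey : t ^ (p - 1) ≤ s ^ (p - 1) + (p - 1) * (t / s - 1) * s ^ (p - 1) := by
      rw [hdiv] at hb
      have := mul_le_mul_of_nonneg_right hb hsp1.le
      rw [div_mul_cancel₀ _ hsp1.ne'] at this
      linarith [this]
    have hexp : s ^ (p - 1) = s ^ (p - 2) * s := by
      rw [show p - 1 = (p - 2) + 1 by ring, Real.rpow_add h, Real.rpow_one]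
    have hts' : (t / s - 1) * s = t - s := by field_simp
    calc (p - 1) * (s - t) * s ^ (p - 2)
        = -((p - 1) * (t / s - 1) * s ^ (p - 1)) := by
          rw [hexp]; field_simp; ring
      _ ≤ s ^ (p - 1) - t ^ (p - 1) := by linarith

-- subadditivity of x ↦ x^q for 0 ≤ q ≤ 1
lemma aux_subadd {q : ℝ} (hq0 : 0 ≤ q) (hq1 : q ≤ 1) {a b : ℝ} (ha : 0 ≤ a) (hb : 0 ≤ b) :
    (a + b) ^ q ≤ a ^ q + b ^ q := by
  have h := NNReal.rpow_add_le_add_rpow a.toNNReal b.toNNReal hq0 hq1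
  have h' := NNReal.coe_le_coe.2 h
  simpa [NNReal.coe_rpow, ← Real.toNNReal_add ha hb,
    Real.coe_toNNReal _ (by positivity : (0:ℝ) ≤ a + b),
    Real.coe_toNNReal _ ha, Real.coe_toNNReal _ hb] using h'

-- power mean: (a+b)^p ≤ 2^(p-1) (a^p + b^p)
lemma aux_powmean {p : ℝ} (hp : 1 ≤ p) {a b : ℝ} (ha : 0 ≤ a) (hb : 0 ≤ b) :
    (a + b) ^ p ≤ 2 ^ (p - 1) * (a ^ p + b ^ p) := by
  have h := NNReal.rpow_add_le_mul_rpow_add_rpow a.toNNReal b.toNNReal hp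
  have h' := NNReal.coe_le_coe.2 h
  simpa [NNReal.coe_rpow, ← Real.toNNReal_add ha hb,
    Real.coe_toNNReal _ (by positivity : (0:ℝ) ≤ a + b),
    Real.coe_toNNReal _ ha, Real.coe_toNNReal _ hb] using h'

-- endpoint 1 (aligned case), assuming t ≤ s
lemma aux_E1' {p : ℝ} (hp1 : 1 < p) (hp2 : p < 2) {s t : ℝ} (ht : 0 ≤ t) (hts : t ≤ s) :
    (p - 1) * ((s - t) ^ 2 * (s + t) ^ (p - 2)) ≤ (s ^ (p - 1) - t ^ (p - 1)) * (s - t) := by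
  have hs : 0 ≤ s := ht.trans hts
  rcases hs.eq_or_lt with h | h
  · have hts0 : t = 0 := le_antisymm (h ▸ hts) ht
    simp [← h, hts0, Real.zero_rpow (by linarith : p - 2 ≠ 0)]
  · have hw : (s + t) ^ (p - 2) ≤ s ^ (p - 2) :=
      Real.rpow_le_rpow_of_nonpos h (by linarith) (by linarith)
    have h1 : (p - 1) * ((s - t) ^ 2 * (s + t) ^ (p - 2))
        ≤ (p - 1) * ((s - t) ^ 2 * s ^ (p - 2)) := by
      have := mul_le_mul_of_nonneg_left hw (by positivity : (0:ℝ) ≤ (s - t) ^ 2)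
      nlinarith [this]
    have h2 := mul_le_mul_of_nonneg_right (aux_tangent hp1 hp2 ht hts)
      (by linarith : (0:ℝ) ≤ s - t)
    calc (p - 1) * ((s - t) ^ 2 * (s + t) ^ (p - 2))
        ≤ (p - 1) * (s - t) * s ^ (p - 2) * (s - t) := by nlinarith [h1]
      _ ≤ (s ^ (p - 1) - t ^ (p - 1)) * (s - t) := h2

-- endpoint 1, general
lemma aux_E1 {p : ℝ} (hp1 : 1 < p) (hp2 : p < 2) {s t : ℝ} (hs : 0 ≤ s) (ht : 0 ≤ t) :
    (p - 1) * ((s - t) ^ 2 * (s + t) ^ (p - 2)) ≤ (s ^ (p - 1) - t ^ (p - 1)) * (s - t) := by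
  rcases le_total t s with h | h
  · exact aux_E1' hp1 hp2 ht h
  · have := aux_E1' hp1 hp2 hs h
    have e1 : (t - s) ^ 2 = (s - t) ^ 2 := by ring
    have e2 : (t + s) = (s + t) := by ring
    rw [e1, e2] at this
    calc (p - 1) * ((s - t) ^ 2 * (s + t) ^ (p - 2))
        ≤ (t ^ (p - 1) - s ^ (p - 1)) * (t - s) := this
      _ = (s ^ (p - 1) - t ^ (p - 1)) * (s - t) := by ring

-- endpoint 2 (anti-aligned case)
lemma aux_E2 {p : ℝ} (hp1 : 1 < p) (hp2 : p < 2) {s t : ℝ} (hs : 0 ≤ s) (ht : 0 ≤ t) :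
    (p - 1) * ((s + t) ^ 2 * (s + t) ^ (p - 2)) ≤ (s ^ (p - 1) + t ^ (p - 1)) * (s + t) := by
  rcases (by positivity : (0:ℝ) ≤ s + t).eq_or_lt with h | h
  · simp [← h]
  · have hu : (s + t) ^ 2 * (s + t) ^ (p - 2) = (s + t) ^ (p - 1) * (s + t) := by
      rw [show (s + t) ^ (2:ℕ) = (s + t) ^ (2:ℝ) by rw [Real.rpow_two],
        ← Real.rpow_add h, show (2:ℝ) + (p - 2) = (p - 1) + 1 by ring,
        Real.rpow_add_one h.ne']
    rw [hu]
    have hsub : (s + t) ^ (p - 1) ≤ s ^ (p - 1) + t ^ (p - 1) :=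
      aux_subadd (by linarith) (by linarith) hs ht
    have h1 : (0:ℝ) < (s + t) ^ (p - 1) := Real.rpow_pos_of_pos h _
    have h2 : (p - 1) * ((s + t) ^ (p - 1) * (s + t)) ≤ (s + t) ^ (p - 1) * (s + t) := by
      nlinarith [mul_pos h1 h]
    have h3 := mul_le_mul_of_nonneg_right hsub h.le
    linarith

-- helper identities for rpow with possibly-zero base
lemma aux_rp1 {p : ℝ} (hp1 : 1 < p) (hp2 : p < 2) {s : ℝ} (hs : 0 ≤ s) :
    s ^ (p - 2) * s = s ^ (p - 1) := by
  rcases hs.eq_or_lt with h | h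
  · simp [← h, Real.zero_rpow (by linarith : p - 2 ≠ 0),
      Real.zero_rpow (by linarith : p - 1 ≠ 0)]
  · rw [← Real.rpow_add_one h.ne']; ring_nf

lemma aux_rp2 {p : ℝ} (hp1 : 1 < p) {s : ℝ} (hs : 0 ≤ s) :
    s ^ (p - 1) * s = s ^ p := by
  rcases hs.eq_or_lt with h | h
  · simp [← h, Real.zero_rpow (by linarith : p - 1 ≠ 0),
      Real.zero_rpow (by linarith : p ≠ 0)]
  · rw [← Real.rpow_add_one h.ne']; ring_nf

-- core pointwise inequality
lemma aux_core {p : ℝ} (hp1 : 1 < p) (hp2 : p < 2)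
    {F : Type*} [NormedAddCommGroup F] [InnerProductSpace ℝ F] (a b : F) :
    (p - 1) * (‖a - b‖ ^ 2 * (‖a‖ + ‖b‖) ^ (p - 2))
      ≤ (inner ℝ (‖a‖ ^ (p - 2) • a - ‖b‖ ^ (p - 2) • b) (a - b) : ℝ) := by
  have hs0 : (0:ℝ) ≤ ‖a‖ := norm_nonneg a
  have ht0 : (0:ℝ) ≤ ‖b‖ := norm_nonneg b
  have hrhs : (inner ℝ (‖a‖ ^ (p - 2) • a - ‖b‖ ^ (p - 2) • b) (a - b) : ℝ)
      = ‖a‖ ^ (p - 2) * ‖a‖ ^ 2 + ‖b‖ ^ (p - 2) * ‖b‖ ^ 2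
        - (‖a‖ ^ (p - 2) + ‖b‖ ^ (p - 2)) * (inner ℝ a b : ℝ) := by
    simp only [inner_sub_left, inner_sub_right, real_inner_smul_left,
      real_inner_self_eq_norm_sq]
    rw [real_inner_comm b a]
    ring
  have hlhs : ‖a - b‖ ^ 2 = ‖a‖ ^ 2 + ‖b‖ ^ 2 - 2 * (inner ℝ a b : ℝ) := by
    rw [norm_sub_sq_real]; ring
  rw [hrhs, hlhs]
  set s : ℝ := ‖a‖
  set t : ℝ := ‖b‖
  set r : ℝ := inner ℝ a b with hr
  have hC := abs_real_inner_le_norm a b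
  rw [abs_le] at hC
  obtain ⟨hC1, hC2⟩ := hC
  -- identities
  have hs1 : s ^ (p - 2) * s = s ^ (p - 1) := aux_rp1 hp1 hp2 hs0
  have ht1 : t ^ (p - 2) * t = t ^ (p - 1) := aux_rp1 hp1 hp2 ht0
  have hs2 : s ^ (p - 1) * s = s ^ p := aux_rp2 hp1 hs0
  have ht2 : t ^ (p - 1) * t = t ^ p := aux_rp2 hp1 ht0
  have hE1 := aux_E1 hp1 hp2 hs0 ht0
  have hE2 := aux_E2 hp1 hp2 hs0 ht0
  rcases le_total 0 (s ^ (p - 2) + t ^ (p - 2) - 2 * (p - 1) * (s + t) ^ (p - 2)) with hB | hB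
  · -- use endpoint r = s*t (E1)
    have hmono := mul_le_mul_of_nonneg_left (sub_nonneg.2 hC2) hB
    nlinarith [hE1, hmono, hs1, ht1, hs2, ht2]
  · -- use endpoint r = -s*t (E2)
    have hmono := mul_le_mul_of_nonpos_left (by linarith : -(s * t) - r ≤ 0) hB
    nlinarith [hE2, hmono, hs1, ht1, hs2, ht2]

-- pointwise split for Hölder
lemma aux_split {p : ℝ} (hp1 : 1 < p) (hp2 : p < 2)
    {F : Type*} [NormedAddCommGroup F] [InnerProductSpace ℝ F] (a b : F) :
    ‖a - b‖ ^ p ≤ (1 / (p - 1) * (inner ℝ (‖a‖ ^ (p - 2) • a - ‖b‖ ^ (p - 2) • b) (a - b) : ℝ))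
        ^ (p / 2) * ((‖a‖ + ‖b‖) ^ p) ^ ((2 - p) / 2) := by
  have hp0 : (0:ℝ) < p - 1 := by linarith
  set D : ℝ := inner ℝ (‖a‖ ^ (p - 2) • a - ‖b‖ ^ (p - 2) • b) (a - b) with hD
  have hcore := aux_core hp1 hp2 a b
  have hw0 : (0:ℝ) ≤ (‖a‖ + ‖b‖) ^ (p - 2) := Real.rpow_nonneg (by positivity) _
  have hDnn : 0 ≤ D := le_trans (by positivity) hcore
  have hkey : ‖a - b‖ ^ 2 * (‖a‖ + ‖b‖) ^ (p - 2) ≤ 1 / (p - 1) * D := by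
    have h2 := mul_le_mul_of_nonneg_left hcore
      (le_of_lt (by positivity : (0:ℝ) < 1 / (p - 1)))
    calc ‖a - b‖ ^ 2 * (‖a‖ + ‖b‖) ^ (p - 2)
        = 1 / (p - 1) * ((p - 1) * (‖a - b‖ ^ 2 * (‖a‖ + ‖b‖) ^ (p - 2))) := by
          field_simp
      _ ≤ 1 / (p - 1) * D := h2
  rcases (by positivity : (0:ℝ) ≤ ‖a‖ + ‖b‖).eq_or_lt with h | h
  · -- a = b = 0
    have ha : ‖a‖ = 0 := by cases (norm_nonneg a).eq_or_lt with
      | inl h' => exact h'.symm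
      | inr h' => nlinarith [norm_nonneg b]
    have hb : ‖b‖ = 0 := by nlinarith [norm_nonneg b]
    have ha' : a = 0 := norm_eq_zero.1 ha
    have hb' : b = 0 := norm_eq_zero.1 hb
    rw [ha', hb', sub_zero, norm_zero, Real.zero_rpow (by linarith : p ≠ 0)]
    positivity
  · set u : ℝ := ‖a‖ + ‖b‖
    have hid : ‖a - b‖ ^ p
        = (‖a - b‖ ^ 2 * u ^ (p - 2)) ^ (p / 2) * (u ^ p) ^ ((2 - p) / 2) := by
      rw [Real.mul_rpow (by positivity) (Real.rpow_nonneg h.le _),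
        ← Real.rpow_natCast ‖a - b‖ 2, ← Real.rpow_mul (norm_nonneg _),
        ← Real.rpow_mul h.le, ← Real.rpow_mul h.le, mul_assoc, ← Real.rpow_add h]
      rw [show ((2:ℕ):ℝ) * (p / 2) = p by push_cast; ring,
        show (p - 2) * (p / 2) + p * ((2 - p) / 2) = 0 by ring,
        Real.rpow_zero, mul_one]
    rw [hid]
    have h1 : (‖a - b‖ ^ 2 * u ^ (p - 2)) ^ (p / 2) ≤ (1 / (p - 1) * D) ^ (p / 2) :=
      Real.rpow_le_rpow (by positivity) hkey (by linarith)
    exact mul_le_mul_of_nonneg_right h1 (Real.rpow_nonneg (Real.rpow_nonneg h.le _) _)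

-- Young-type bound
lemma aux_young {p : ℝ} (hp1 : 1 < p) {s t : ℝ} (hs : 0 ≤ s) (ht : 0 ≤ t) :
    s ^ (p - 1) * t ≤ s ^ p + t ^ p := by
  rcases le_total t s with h | h
  · have h1 : s ^ (p - 1) * t ≤ s ^ (p - 1) * s :=
      mul_le_mul_of_nonneg_left h (Real.rpow_nonneg hs _)
    rw [aux_rp2 hp1 hs] at h1
    have : (0:ℝ) ≤ t ^ p := Real.rpow_nonneg ht _
    linarith
  · have h1 : s ^ (p - 1) * t ≤ t ^ (p - 1) * t :=
      mul_le_mul_of_nonneg_right (Real.rpow_le_rpow hs h (by linarith)) ht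
    rw [aux_rp2 hp1 ht] at h1
    have : (0:ℝ) ≤ s ^ p := Real.rpow_nonneg hs _
    linarith

-- bound on the inner product
lemma aux_ipbound {p : ℝ} (hp1 : 1 < p) (hp2 : p < 2)
    {F : Type*} [NormedAddCommGroup F] [InnerProductSpace ℝ F] (a b : F) :
    (inner ℝ (‖a‖ ^ (p - 2) • a - ‖b‖ ^ (p - 2) • b) (a - b) : ℝ)
      ≤ 3 * (‖a‖ ^ p + ‖b‖ ^ p) := by
  have hs : (0:ℝ) ≤ ‖a‖ := norm_nonneg a
  have ht : (0:ℝ) ≤ ‖b‖ := norm_nonneg b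
  have h1 : (inner ℝ (‖a‖ ^ (p - 2) • a - ‖b‖ ^ (p - 2) • b) (a - b) : ℝ)
      ≤ ‖‖a‖ ^ (p - 2) • a - ‖b‖ ^ (p - 2) • b‖ * ‖a - b‖ := real_inner_le_norm _ _
  have h2 : ‖‖a‖ ^ (p - 2) • a - ‖b‖ ^ (p - 2) • b‖ ≤ ‖a‖ ^ (p - 1) + ‖b‖ ^ (p - 1) := by
    refine (norm_sub_le _ _).trans ?_
    rw [norm_smul, norm_smul, Real.norm_of_nonneg (Real.rpow_nonneg hs _),
      Real.norm_of_nonneg (Real.rpow_nonneg ht _), aux_rp1 hp1 hp2 hs, aux_rp1 hp1 hp2 ht]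
  have h3 : ‖a - b‖ ≤ ‖a‖ + ‖b‖ := norm_sub_le _ _
  have h4 : ‖‖a‖ ^ (p - 2) • a - ‖b‖ ^ (p - 2) • b‖ * ‖a - b‖
      ≤ (‖a‖ ^ (p - 1) + ‖b‖ ^ (p - 1)) * (‖a‖ + ‖b‖) := by
    apply mul_le_mul h2 h3 (norm_nonneg _) (by positivity)
  have h5 := aux_young hp1 (t := ‖b‖) hs ht
  have h6 := aux_young hp1 (t := ‖a‖) ht hs
  have e1 := aux_rp2 hp1 (s := ‖a‖) hs
  have e2 := aux_rp2 hp1 (s := ‖b‖) ht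
  nlinarith [h1, h4, h5, h6]

/-- Integral monotonicity estimate for `1 < p < 2`:
`∫ |U - V|^p ≤ ((1/(p-1)) ∫ (|U|^{p-2}U - |V|^{p-2}V)·(U - V))^{p/2}
  (2∫|U|^p + 2∫|V|^p)^{(2-p)/2}`, with pointwise nonnegative integrand. -/
theorem integral_monotonicity_p_lt_two
    (p : ℝ) (hp1 : 1 < p) (hp2 : p < 2)
    (N : ℕ) (hN : 1 ≤ N)
    {Ω : Type*} [MeasurableSpace Ω] (μ : Measure Ω)
    (U V : Ω → EuclideanSpace ℝ (Fin N))
    (hUm : Measurable U) (hVm : Measurable V)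
    (hUp : ∫⁻ x, ENNReal.ofReal (‖U x‖ ^ p) ∂μ < ⊤)
    (hVp : ∫⁻ x, ENNReal.ofReal (‖V x‖ ^ p) ∂μ < ⊤) :
    (∀ x : Ω,
      0 ≤ (inner ℝ (‖U x‖ ^ (p - 2) • U x - ‖V x‖ ^ (p - 2) • V x) (U x - V x) : ℝ))
    ∧ ∫ x, ‖U x - V x‖ ^ p ∂μ
        ≤ (1 / (p - 1)
              * ∫ x, (inner ℝ (‖U x‖ ^ (p - 2) • U x - ‖V x‖ ^ (p - 2) • V x)
                  (U x - V x) : ℝ) ∂μ) ^ (p / 2)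
            * (2 * (∫ x, ‖U x‖ ^ p ∂μ) + 2 * ∫ x, ‖V x‖ ^ p ∂μ) ^ ((2 - p) / 2) := by
  have hp0 : (0:ℝ) < p := by linarith
  have hpm1 : (0:ℝ) < p - 1 := by linarith
  set f : Ω → ℝ := fun x =>
    (inner ℝ (‖U x‖ ^ (p - 2) • U x - ‖V x‖ ^ (p - 2) • V x) (U x - V x) : ℝ) with hfdef
  have hfnn : ∀ x, 0 ≤ f x := fun x =>
    le_trans (by positivity) (aux_core hp1 hp2 (U x) (V x))
  refine ⟨hfnn, ?_⟩
  -- measurability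
  have hfm : Measurable f := by
    apply Measurable.inner
    · exact ((hUm.norm.pow measurable_const).smul hUm).sub
        ((hVm.norm.pow measurable_const).smul hVm)
    · exact hUm.sub hVm
  have hUi : Integrable (fun x => ‖U x‖ ^ p) μ :=
    ⟨(hUm.norm.pow measurable_const).aestronglyMeasurable,
      (hasFiniteIntegral_iff_ofReal
        (Filter.Eventually.of_forall fun x => Real.rpow_nonneg (norm_nonneg _) _)).2 hUp⟩
  have hVi : Integrable (fun x => ‖V x‖ ^ p) μ :=
    ⟨(hVm.norm.pow measurable_const).aestronglyMeasurable,
      (hasFiniteIntegral_iff_ofReal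
        (Filter.Eventually.of_forall fun x => Real.rpow_nonneg (norm_nonneg _) _)).2 hVp⟩
  have hfi : Integrable f μ := by
    refine Integrable.mono' ((hUi.add hVi).const_mul 3) hfm.aestronglyMeasurable
      (Filter.Eventually.of_forall fun x => ?_)
    rw [Real.norm_of_nonneg (hfnn x)]
    exact aux_ipbound hp1 hp2 (U x) (V x)
  -- the sum function
  have hWm : Measurable (fun x => (‖U x‖ + ‖V x‖) ^ p) :=
    (hUm.norm.add hVm.norm).pow measurable_const
  have hWbound : ∀ x, (‖U x‖ + ‖V x‖) ^ p ≤ 2 * (‖U x‖ ^ p + ‖V x‖ ^ p) := by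
    intro x
    refine (aux_powmean hp1.le (norm_nonneg _) (norm_nonneg _)).trans ?_
    have h2 : (2:ℝ) ^ (p - 1) ≤ 2 := by
      calc (2:ℝ) ^ (p - 1) ≤ 2 ^ (1:ℝ) :=
        Real.rpow_le_rpow_of_exponent_le one_le_two (by linarith)
      _ = 2 := Real.rpow_one 2
    have : (0:ℝ) ≤ ‖U x‖ ^ p + ‖V x‖ ^ p := by positivity
    nlinarith
  have hWi : Integrable (fun x => (‖U x‖ + ‖V x‖) ^ p) μ := by
    refine Integrable.mono' ((hUi.add hVi).const_mul 2) hWm.aestronglyMeasurable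
      (Filter.Eventually.of_forall fun x => ?_)
    rw [Real.norm_of_nonneg (Real.rpow_nonneg (by positivity) _)]
    exact hWbound x
  -- the two Hölder factors
  set g : Ω → ℝ := fun x => (1 / (p - 1) * f x) ^ (p / 2) with hgdef
  set h : Ω → ℝ := fun x => ((‖U x‖ + ‖V x‖) ^ p) ^ ((2 - p) / 2) with hhdef
  have hgnn : ∀ x, 0 ≤ g x := fun x =>
    Real.rpow_nonneg (mul_nonneg (by positivity) (hfnn x)) _
  have hhnn : ∀ x, 0 ≤ h x := fun x =>
    Real.rpow_nonneg (Real.rpow_nonneg (by positivity) _) _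
  have hgm : Measurable g := (measurable_const.mul hfm).pow measurable_const
  have hhm : Measurable h := hWm.pow measurable_const
  have hgpow : ∀ x, g x ^ (2 / p) = 1 / (p - 1) * f x := by
    intro x
    show ((1 / (p - 1) * f x) ^ (p / 2)) ^ (2 / p) = _
    rw [← Real.rpow_mul (mul_nonneg (by positivity) (hfnn x)),
      show p / 2 * (2 / p) = 1 by field_simp, Real.rpow_one]
  have hhpow : ∀ x, h x ^ (2 / (2 - p)) = (‖U x‖ + ‖V x‖) ^ p := by
    intro x
    show (((‖U x‖ + ‖V x‖) ^ p) ^ ((2 - p) / 2)) ^ (2 / (2 - p)) = _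
    rw [← Real.rpow_mul (Real.rpow_nonneg (by positivity) _),
      show (2 - p) / 2 * (2 / (2 - p)) = 1 by
        rw [div_mul_div_comm, mul_comm (2 - p) 2]
        exact div_self (by nlinarith : (0:ℝ) < 2 * (2 - p)).ne', Real.rpow_one]
  have q0 : ENNReal.ofReal (2 / p) ≠ 0 :=
    (ENNReal.ofReal_pos.2 (by positivity)).ne'
  have r0 : ENNReal.ofReal (2 / (2 - p)) ≠ 0 :=
    (ENNReal.ofReal_pos.2 (div_pos two_pos (by linarith))).ne'
  have qt : ENNReal.ofReal (2 / p) ≠ ⊤ := ENNReal.ofReal_ne_top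
  have rt : ENNReal.ofReal (2 / (2 - p)) ≠ ⊤ := ENNReal.ofReal_ne_top
  have hgmem : MemLp g (ENNReal.ofReal (2 / p)) μ := by
    refine (memLp_norm_rpow_iff hgm.aestronglyMeasurable q0 qt).1 ?_
    rw [ENNReal.div_self q0 qt, ENNReal.toReal_ofReal (by positivity)]
    have heq : (fun x => ‖g x‖ ^ (2 / p)) = fun x => 1 / (p - 1) * f x :=
      funext fun x => by rw [Real.norm_of_nonneg (hgnn x), hgpow x]
    rw [heq, memLp_one_iff_integrable]
    exact hfi.const_mul _
  have hhmem : MemLp h (ENNReal.ofReal (2 / (2 - p))) μ := by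
    refine (memLp_norm_rpow_iff hhm.aestronglyMeasurable r0 rt).1 ?_
    rw [ENNReal.div_self r0 rt,
      ENNReal.toReal_ofReal (le_of_lt (div_pos two_pos (by linarith)))]
    have heq : (fun x => ‖h x‖ ^ (2 / (2 - p))) = fun x => (‖U x‖ + ‖V x‖) ^ p :=
      funext fun x => by rw [Real.norm_of_nonneg (hhnn x), hhpow x]
    rw [heq, memLp_one_iff_integrable]
    exact hWi
  have hconj : Real.HolderConjugate (2 / p) (2 / (2 - p)) := by
    refine Real.holderConjugate_iff.mpr ⟨?_, ?_⟩
    · rw [lt_div_iff₀ hp0]; linarith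
    · rw [inv_div, inv_div, ← add_div, show p + (2 - p) = 2 by ring]
      norm_num
  have hH := integral_mul_le_Lp_mul_Lq_of_nonneg hconj
    (Filter.Eventually.of_forall hgnn) (Filter.Eventually.of_forall hhnn) hgmem hhmem
  simp only [hgpow, hhpow, one_div_div] at hH
  -- integrability of the product
  have hghi : Integrable (fun x => g x * h x) μ := by
    have hsum : (1 : ENNReal) / 1
        = 1 / ENNReal.ofReal (2 / p) + 1 / ENNReal.ofReal (2 / (2 - p)) := by
      rw [one_div, one_div, one_div, ← ENNReal.ofReal_inv_of_pos (by positivity),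
        ← ENNReal.ofReal_inv_of_pos (div_pos two_pos (by linarith)),
        ← ENNReal.ofReal_add (by positivity)
          (le_of_lt (by rw [inv_div]; exact div_pos (by linarith) two_pos)),
        show (2 / p : ℝ)⁻¹ + (2 / (2 - p) : ℝ)⁻¹ = 1 by
          rw [inv_div, inv_div, ← add_div, show p + (2 - p) = 2 by ring]
          norm_num]
      simp
    haveI : ENNReal.HolderTriple (ENNReal.ofReal (2 / p)) (ENNReal.ofReal (2 / (2 - p))) 1 :=
      ⟨by simpa [one_div] using hsum.symm⟩
    have := hhmem.smul hgmem (r := 1)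
    rw [memLp_one_iff_integrable] at this
    exact this
  -- chain of inequalities
  have hmain : ∫ x, ‖U x - V x‖ ^ p ∂μ ≤ ∫ x, g x * h x ∂μ := by
    refine integral_mono_of_nonneg
      (Filter.Eventually.of_forall fun x => Real.rpow_nonneg (norm_nonneg _) _) hghi
      (Filter.Eventually.of_forall fun x => ?_)
    exact aux_split hp1 hp2 (U x) (V x)
  rw [integral_const_mul] at hH
  have hI2 : ∫ x, (‖U x‖ + ‖V x‖) ^ p ∂μ
      ≤ 2 * (∫ x, ‖U x‖ ^ p ∂μ) + 2 * ∫ x, ‖V x‖ ^ p ∂μ := by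
    have hmono := integral_mono hWi ((hUi.add hVi).const_mul 2) hWbound
    rw [integral_const_mul] at hmono
    simp only [Pi.add_apply] at hmono
    rw [integral_add hUi hVi] at hmono
    linarith
  have hfac2 : (∫ x, (‖U x‖ + ‖V x‖) ^ p ∂μ) ^ ((2 - p) / 2)
      ≤ (2 * (∫ x, ‖U x‖ ^ p ∂μ) + 2 * ∫ x, ‖V x‖ ^ p ∂μ) ^ ((2 - p) / 2) :=
    Real.rpow_le_rpow
      (integral_nonneg fun x => Real.rpow_nonneg (by positivity) _) hI2 (by linarith)
  have hfac1 : (0:ℝ) ≤ (1 / (p - 1) * ∫ x, f x ∂μ) ^ (p / 2) :=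
    Real.rpow_nonneg (mul_nonneg (by positivity) (integral_nonneg hfnn)) _
  calc ∫ x, ‖U x - V x‖ ^ p ∂μ ≤ ∫ x, g x * h x ∂μ := hmain
    _ ≤ (1 / (p - 1) * ∫ x, f x ∂μ) ^ (p / 2)
        * (∫ x, (‖U x‖ + ‖V x‖) ^ p ∂μ) ^ ((2 - p) / 2) := hH
    _ ≤ (1 / (p - 1) * ∫ x, f x ∂μ) ^ (p / 2)
        * (2 * (∫ x, ‖U x‖ ^ p ∂μ) + 2 * ∫ x, ‖V x‖ ^ p ∂μ) ^ ((2 - p) / 2) :=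
      mul_le_mul_of_nonneg_left hfac2 hfac1
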